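/- arXiv:2104.14828 — 8 statements merged into one kernel-verified Lean document; each statement's English description precedes it below -/
import Mathlib

section
/- For every JSON value J: J is of the form bool b for some b : Bool if and only if it is NOT the case that both (for all b, if J = bool b then b = true) and (for all b, if J = bool b then b = false). (This is the correctness of the encoding type(Bool) = ¬(isBoolValue(true) ∧ isBoolValue(false)).) -/
inductive Json where
  | null : Json
  | bool : Bool → Json
  | num : ℚ → Json
  | str : String → Json
  | arr : List Json → Json
  | obj : List (String × Json) → Json

theorem typeBool_encoding (J : Json) :
    (∃ b : Bool, J = Json.bool b) ↔
      ¬ ((∀ b : Bool, J = Json.bool b → b = true) ∧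
         (∀ b : Bool, J = Json.bool b → b = false)) := by
  constructor
  · rintro ⟨b, rfl⟩ ⟨h1, h2⟩
    have := h1 b rfl
    have := h2 b rfl
    simp_all
  · intro h
    cases J with
    | bool b => exact ⟨b, rfl⟩
    | _ => exact absurd ⟨fun b hb => by simp_all, fun b hb => by simp_all⟩ h
end

section
/- For every JSON value J: J is of the form obj ms for some ms : List (String × Json) if and only if it is NOT the case that both (for all ms, if J = obj ms then ms.length = 0) and (for all ms, if J = obj ms then ms.length = 1). (This is the correctness of the encoding type(Obj) = ¬(pro_0^0 ∧ pro_1^1).) -/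
theorem typeObj_encoding (J : Json) :
    (∃ ms : List (String × Json), J = Json.obj ms) ↔
      ¬ ((∀ ms : List (String × Json), J = Json.obj ms → ms.length = 0) ∧
         (∀ ms : List (String × Json), J = Json.obj ms → ms.length = 1)) := by
  constructor
  · rintro ⟨ms, rfl⟩ ⟨h0, h1⟩
    have := h0 ms rfl
    have := h1 ms rfl
    omega
  · intro h
    by_contra hne
    exact h ⟨fun ms hm => absurd ⟨ms, hm⟩ hne, fun ms hm => absurd ⟨ms, hm⟩ hne⟩
end

section
/- Let n : ℕ and S : Fin n → Json → Prop, and let J be a JSON value. Then ¬(for all l, if J = arr l then [for every position p < l.length: if p < n then S p (l[p]), and if p ≥ n then False]) if and only if there exists l with J = arr l such that either (there exists i : Fin n with (i : ℕ) < l.length and ¬ S i (l[i])) or l.length ≥ n + 1. (This is the items negation formula ¬(Ite(S_1 ⋯ S_n; f)) = type(Arr) ∧ (⋁_{i≤n}(Ite(t ⋯ t, ¬S_i; t) ∧ #_i^∞ t) ∨ #_{n+1}^∞ t).) -/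
theorem items_negation_false_tail (n : ℕ) (S : Fin n → Json → Prop) (J : Json) :
    ¬ (∀ l : List Json, J = Json.arr l →
        ∀ (p : ℕ) (h : p < l.length),
          (∀ hp : p < n, S ⟨p, hp⟩ (l[p]'h)) ∧ (n ≤ p → False)) ↔
      (∃ l : List Json, J = Json.arr l ∧
        ((∃ i : Fin n, ∃ h : (i : ℕ) < l.length, ¬ S i (l[(i : ℕ)]'h)) ∨
          l.length ≥ n + 1)) := by
  constructor
  · intro H
    push_neg at H
    obtain ⟨l, hJ, p, h, hfail⟩ := H
    refine ⟨l, hJ, ?_⟩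
    by_cases hp : p < n
    · rcases Classical.em (S ⟨p, hp⟩ (l[p]'h)) with hS | hS
      · exfalso
        have := hfail (fun _ => hS)
        omega
      · exact Or.inl ⟨⟨p, hp⟩, h, hS⟩
    · right
      omega
  · rintro ⟨l, hJ, hcase⟩ H
    rcases hcase with ⟨i, h, hS⟩ | hlen
    · exact hS ((H l hJ i h).1 i.2)
    · have := (H l hJ n (by omega)).2 le_rfl
      exact this
end

section
/- Let n : ℕ and S : Fin n → Json → Prop, and let J be a JSON value. Then ¬(for all l, if J = arr l then for every position p with p < n and p < l.length, S p (l[p]) holds) if and only if there exists l with J = arr l and there exists i : Fin n with (i : ℕ) < l.length and ¬ S i (l[i]). (This is the items negation formula ¬(Ite(S_1 ⋯ S_n; t)) = type(Arr) ∧ ⋁_{i≤n}(Ite(t ⋯ t, ¬S_i; t) ∧ #_i^∞ t).) -/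
theorem items_negation_true_tail (n : ℕ) (S : Fin n → Json → Prop) (J : Json) :
    ¬ (∀ l : List Json, J = Json.arr l →
        ∀ (p : ℕ) (h : p < l.length) (hp : p < n), S ⟨p, hp⟩ (l[p]'h)) ↔
      (∃ l : List Json, J = Json.arr l ∧
        ∃ i : Fin n, ∃ h : (i : ℕ) < l.length, ¬ S i (l[(i : ℕ)]'h)) := by
  constructor
  · intro h
    push_neg at h
    obtain ⟨l, hl, p, hp, hpn, hS⟩ := h
    exact ⟨l, hl, ⟨p, hpn⟩, hp, hS⟩
  · rintro ⟨l, rfl, i, h, hS⟩ hall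
    exact hS (hall l rfl i h i.2)
end

section
/- Let n : ℕ, S : Fin n → Json → Prop, T : Json → Prop, and let J be a JSON value. Then ¬(for all l, if J = arr l then [for every position p < l.length: if p < n then S p (l[p]), and if p ≥ n then T (l[p])]) if and only if there exists l with J = arr l such that either (there exists i : Fin n with (i : ℕ) < l.length and ¬ S i (l[i])) or (there exists a bitmap bm : Fin n → Bool such that [for every i : Fin n with (i : ℕ) < l.length: if bm i = true then ¬ T (l[i]) and if bm i = false then T (l[i])] and sum(bm) + 1 ≤ cnt¬T(l)). (This is the general items negation formula ¬(Ite(S_1 ⋯ S_n; S)) = type(Arr) ∧ (⋁_i(Ite(t ⋯ t, ¬S_i; t) ∧ #_i^∞ t) ∨ ⋁_{bm ∈ 2^n}(Ite(NotIf(bm(1),S) ⋯ NotIf(bm(n),S); t) ∧ #_{sum(bm)+1}^∞ ¬S)), enumerating all 2^n distributions of head violations.) -/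
open Classical in
theorem items_negation_general (n : ℕ) (S : Fin n → Json → Prop) (T : Json → Prop) (J : Json) :
    ¬ (∀ l : List Json, J = Json.arr l →
        ∀ (p : ℕ) (h : p < l.length),
          (∀ hp : p < n, S ⟨p, hp⟩ (l[p]'h)) ∧ (n ≤ p → T (l[p]'h))) ↔
      (∃ l : List Json, J = Json.arr l ∧
        ((∃ i : Fin n, ∃ h : (i : ℕ) < l.length, ¬ S i (l[(i : ℕ)]'h)) ∨
          (∃ bm : Fin n → Bool,
            (∀ (i : Fin n) (h : (i : ℕ) < l.length),
              (bm i = true → ¬ T (l[(i : ℕ)]'h)) ∧ (bm i = false → T (l[(i : ℕ)]'h))) ∧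
            (Finset.univ.filter (fun i : Fin n => bm i = true)).card + 1 ≤
              (Finset.univ.filter (fun p : Fin l.length => ¬ T (l.get p))).card))) := by
  classical
  constructor
  · intro h
    push_neg at h
    obtain ⟨l, hJ, p, hp, hbad⟩ := h
    refine ⟨l, hJ, ?_⟩
    by_cases hA : ∀ hp' : p < n, S ⟨p, hp'⟩ (l[p]'hp)
    case neg =>
      push_neg at hA
      obtain ⟨hpn, hns⟩ := hA
      exact Or.inl ⟨⟨p, hpn⟩, hp, hns⟩
    case pos =>
      obtain ⟨hnp, hnt⟩ := hbad hA
      set bm : Fin n → Bool := fun i =>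
        if h : (i : ℕ) < l.length then decide (¬ T (l[(i : ℕ)]'h)) else false with hbm
      refine Or.inr ⟨bm, ?_, ?_⟩
      · intro i h
        constructor
        · intro hb
          simp only [hbm, dif_pos h, decide_eq_true_eq] at hb
          exact hb
        · intro hb
          simp only [hbm, dif_pos h, decide_eq_false_iff_not, not_not] at hb
          exact hb
      · set s := Finset.univ.filter (fun i : Fin n => bm i = true) with hs
        set t := Finset.univ.filter (fun q : Fin l.length => ¬ T (l.get q)) with ht
        have hmem : ∀ i ∈ s, ∃ h : (i : ℕ) < l.length, ¬ T (l[(i : ℕ)]'h) := by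
          intro i hi
          simp only [hs, Finset.mem_filter, Finset.mem_univ, true_and, hbm] at hi
          by_cases h : (i : ℕ) < l.length
          · rw [dif_pos h, decide_eq_true_eq] at hi
            exact ⟨h, hi⟩
          · rw [dif_neg h] at hi; exact absurd hi (by simp)
        set f : Fin n → Fin l.length := fun i =>
          if h : (i : ℕ) < l.length then ⟨i, h⟩ else ⟨p, hp⟩ with hf
        have hsub : insert (⟨p, hp⟩ : Fin l.length) (s.image f) ⊆ t := by
          intro q hq
          rcases Finset.mem_insert.mp hq with hq | hq
          · subst hq
            simp only [ht, Finset.mem_filter, Finset.mem_univ, true_and]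
            exact hnt
          · obtain ⟨i, hi, hfi⟩ := Finset.mem_image.mp hq
            obtain ⟨hlen, hTi⟩ := hmem i hi
            simp only [hf, dif_pos hlen] at hfi
            subst hfi
            simp only [ht, Finset.mem_filter, Finset.mem_univ, true_and]
            exact hTi
        have hnotmem : (⟨p, hp⟩ : Fin l.length) ∉ s.image f := by
          intro hq
          obtain ⟨i, hi, hfi⟩ := Finset.mem_image.mp hq
          obtain ⟨hlen, _⟩ := hmem i hi
          simp only [hf, dif_pos hlen] at hfi
          have : (i : ℕ) = p := congrArg Fin.val hfi
          omega
        have hinj : Set.InjOn f s := by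
          intro i hi j hj hij
          obtain ⟨hli, _⟩ := hmem i (by exact hi)
          obtain ⟨hlj, _⟩ := hmem j (by exact hj)
          simp only [hf, dif_pos hli, dif_pos hlj] at hij
          exact Fin.ext (Fin.mk.inj_iff.mp hij)
        have hcard : s.card + 1 ≤ t.card := by
          have h1 := Finset.card_le_card hsub
          rw [Finset.card_insert_of_notMem hnotmem,
            Finset.card_image_of_injOn hinj] at h1
          omega
        exact hcard
  · rintro ⟨l, hJ, hcase⟩ hall
    rcases hcase with ⟨i, h, hns⟩ | ⟨bm, hbm, hcard⟩
    · exact hns ((hall l hJ i h).1 i.isLt)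
    · set s := Finset.univ.filter (fun i : Fin n => bm i = true) with hs
      set t := Finset.univ.filter (fun q : Fin l.length => ¬ T (l.get q)) with ht
      have key : ∀ q ∈ t, ∃ hq : (q : ℕ) < n, bm ⟨q, hq⟩ = true := by
        intro q hq
        simp only [ht, Finset.mem_filter, Finset.mem_univ, true_and] at hq
        have h2 := (hall l hJ q q.isLt).2
        have hqn : (q : ℕ) < n := by
          by_contra hc
          exact hq (h2 (le_of_not_gt hc))
        refine ⟨hqn, ?_⟩
        by_contra hb
        have hb' : bm ⟨q, hqn⟩ = false := by
          cases hbm' : bm ⟨q, hqn⟩ with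
          | false => rfl
          | true => exact absurd hbm' hb
        exact hq ((hbm ⟨q, hqn⟩ q.isLt).2 hb')
      have hsub : t.image Fin.val ⊆ s.image Fin.val := by
        intro x hx
        obtain ⟨q, hq, hqx⟩ := Finset.mem_image.mp hx
        obtain ⟨hqn, hbq⟩ := key q hq
        refine Finset.mem_image.mpr ⟨⟨q, hqn⟩, ?_, hqx⟩
        simp only [hs, Finset.mem_filter, Finset.mem_univ, true_and]
        exact hbq
      have h1 : t.card ≤ s.card := by
        have := Finset.card_le_card hsub
        rwa [Finset.card_image_of_injOn (Fin.val_injective.injOn),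
          Finset.card_image_of_injOn (Fin.val_injective.injOn)] at this
      omega
end

section
/- Let α be a type, l : List α, T : α → Prop, and n : ℕ. Then (there exists a position p with n ≤ p < l.length and ¬ T (l[p])) if and only if (there exists a bitmap bm : Fin n → Bool such that [for every i : Fin n with (i : ℕ) < l.length: if bm i = true then ¬ T (l[i]) and if bm i = false then T (l[i])] and sum(bm) + 1 ≤ cnt¬T(l)). (This is the key lemma behind the formula N_{n+1} in items negation: an array has a tail-non-S element beyond position n iff for some distribution of head-non-S's recorded by a bitmap, the array matches that distribution on its head and contains strictly more non-S elements than the bitmap records.) -/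
open Classical in
theorem tail_violation_bitmap {α : Type*} (l : List α) (T : α → Prop) (n : ℕ) :
    (∃ p : ℕ, ∃ h : p < l.length, n ≤ p ∧ ¬ T (l[p]'h)) ↔
      (∃ bm : Fin n → Bool,
        (∀ (i : Fin n) (h : (i : ℕ) < l.length),
          (bm i = true → ¬ T (l[(i : ℕ)]'h)) ∧ (bm i = false → T (l[(i : ℕ)]'h))) ∧
        (Finset.univ.filter (fun i : Fin n => bm i = true)).card + 1 ≤
          (Finset.univ.filter (fun p : Fin l.length => ¬ T (l.get p))).card) := by
  constructor
  · rintro ⟨p, hp, hnp, hT⟩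
    set bm : Fin n → Bool := fun i =>
      if h : (i : ℕ) < l.length then decide (¬ T (l[(i : ℕ)]'h)) else false with hbm
    refine ⟨bm, ?_, ?_⟩
    · intro i h
      simp [hbm, h]
    · set A := Finset.univ.filter (fun i : Fin n => bm i = true) with hA
      set B := Finset.univ.filter (fun p : Fin l.length => ¬ T (l.get p)) with hB
      have hAcard : (A.image Fin.val).card = A.card :=
        Finset.card_image_of_injective _ Fin.val_injective
      have hBcard : (B.image Fin.val).card = B.card :=
        Finset.card_image_of_injective _ Fin.val_injective
      have hsub : insert p (A.image Fin.val) ⊆ B.image Fin.val := by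
        intro x hx
        rcases Finset.mem_insert.mp hx with hx | hx
        · exact hx ▸ Finset.mem_image.mpr ⟨⟨p, hp⟩, by simpa [hB] using hT, rfl⟩
        · rcases Finset.mem_image.mp hx with ⟨i, hi, rfl⟩
          simp only [hA, Finset.mem_filter] at hi
          have hbi := hi.2
          by_cases h : (i : ℕ) < l.length
          · refine Finset.mem_image.mpr ⟨⟨i, h⟩, ?_, rfl⟩
            simp only [hbm, h, dif_pos] at hbi
            simpa [hB] using of_decide_eq_true hbi
          · simp [hbm, h] at hbi
      have hpA : p ∉ A.image Fin.val := by
        intro hx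
        rcases Finset.mem_image.mp hx with ⟨i, _, rfl⟩
        exact absurd hnp (not_le.mpr i.isLt)
      calc A.card + 1 = (insert p (A.image Fin.val)).card := by
            rw [Finset.card_insert_of_notMem hpA, hAcard]
        _ ≤ (B.image Fin.val).card := Finset.card_le_card hsub
        _ = B.card := hBcard
  · rintro ⟨bm, hmatch, hcard⟩
    by_contra hno
    push_neg at hno
    set A := Finset.univ.filter (fun i : Fin n => bm i = true) with hA
    set B := Finset.univ.filter (fun p : Fin l.length => ¬ T (l.get p)) with hB
    have hsub : B.image Fin.val ⊆ A.image Fin.val := by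
      intro x hx
      rcases Finset.mem_image.mp hx with ⟨q, hq, rfl⟩
      simp only [hB, Finset.mem_filter] at hq
      have hql : (q : ℕ) < l.length := q.isLt
      have hqn : (q : ℕ) < n := by
        by_contra h
        exact (by simpa using hq.2 : ¬ T (l[(q:ℕ)]'hql)) (hno q hql (le_of_not_gt h))
      refine Finset.mem_image.mpr ⟨⟨q, hqn⟩, ?_, rfl⟩
      simp only [hA, Finset.mem_filter, Finset.mem_univ, true_and]
      rcases Bool.eq_false_or_eq_true (bm ⟨q, hqn⟩) with h | h
      · exact h
      · exact absurd ((hmatch ⟨q, hqn⟩ hql).2 h) (by simpa using hq.2)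
    have := Finset.card_le_card hsub
    rw [Finset.card_image_of_injective _ Fin.val_injective,
        Finset.card_image_of_injective _ Fin.val_injective] at this
    omega
end

section
/- Let α be a type, l : List α, and T : α → Prop. Then (there exists a position p with 1 ≤ p < l.length and ¬ T (l[p])) if and only if either ((if 0 < l.length then T (l[0])) and 1 ≤ cnt¬T(l)) or ((if 0 < l.length then ¬ T (l[0])) and 2 ≤ cnt¬T(l)). (This is the special case n = 1 of the tail-violation formula: N_{n+1} = (Ite(S; t) ∧ #_1 ¬S) ∨ (Ite(¬S; t) ∧ #_2 ¬S).) -/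
open Classical in
theorem tail_violation_n_eq_one {α : Type*} (l : List α) (T : α → Prop) :
    (∃ p : ℕ, ∃ h : p < l.length, 1 ≤ p ∧ ¬ T (l[p]'h)) ↔
      ((∀ h : 0 < l.length, T (l[0]'h)) ∧
        1 ≤ (Finset.univ.filter (fun p : Fin l.length => ¬ T (l.get p))).card) ∨
      ((∀ h : 0 < l.length, ¬ T (l[0]'h)) ∧
        2 ≤ (Finset.univ.filter (fun p : Fin l.length => ¬ T (l.get p))).card) := by
  rcases Nat.eq_zero_or_pos l.length with hl | hl
  · constructor
    · rintro ⟨p, h, _⟩; omega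
    · rintro (⟨_, hc⟩ | ⟨_, hc⟩) <;>
      · exfalso
        have h1 : (Finset.univ.filter (fun p : Fin l.length => ¬ T (l.get p))).card ≤
            (Finset.univ : Finset (Fin l.length)).card := Finset.card_filter_le _ _
        have h2 : (Finset.univ : Finset (Fin l.length)).card = 0 := by simp [hl]
        omega
  · by_cases h0 : T (l[0]'hl)
    · constructor
      · rintro ⟨p, hp, hp1, hT⟩
        left
        refine ⟨fun _ => h0, Finset.card_pos.mpr ⟨⟨p, hp⟩, ?_⟩⟩
        simp [List.get_eq_getElem, hT]
      · rintro (⟨_, hc⟩ | ⟨hT0, _⟩)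
        · obtain ⟨⟨p, hp⟩, hmem⟩ := Finset.card_pos.mp hc
          simp only [Finset.mem_filter, Finset.mem_univ, true_and] at hmem
          refine ⟨p, hp, ?_, hmem⟩
          rcases Nat.eq_zero_or_pos p with rfl | h1
          · exact absurd h0 hmem
          · exact h1
        · exact absurd h0 (hT0 hl)
    · constructor
      · rintro ⟨p, hp, hp1, hT⟩
        right
        refine ⟨fun _ => h0, Finset.one_lt_card.mpr ⟨⟨0, hl⟩, ?_, ⟨p, hp⟩, ?_, ?_⟩⟩
        · simp [h0]
        · simp [hT]
        · intro h; apply (Fin.mk.injEq ..).mp at h; omega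
      · rintro (⟨hT0, _⟩ | ⟨_, hc⟩)
        · exact absurd (hT0 hl) h0
        · obtain ⟨a, ha, b, hb, hab⟩ := Finset.one_lt_card.mp hc
          simp only [Finset.mem_filter, Finset.mem_univ, true_and] at ha hb
          rcases Nat.eq_zero_or_pos a.val with h1 | h1
          · refine ⟨b.val, b.isLt, ?_, hb⟩
            have : a ≠ b := hab
            rcases Nat.eq_zero_or_pos b.val with h2 | h2
            · exact absurd (Fin.ext (h1.trans h2.symm)) hab
            · exact h2
          · exact ⟨a.val, a.isLt, h1, ha⟩
end

section
/- Let α be a type, l : List α, n m : ℕ with n < m, S : Fin n → α → Prop, T : α → Prop, S' : Fin m → α → Prop, T' : α → Prop. Define M : Fin m → α → Prop by M i x = (S i x ∧ S' i x) when (i : ℕ) < n, and M i x = (T x ∧ S' i x) when n ≤ (i : ℕ) < m. Then l satisfies Ite(S; T) and l satisfies Ite(S'; T') if and only if l satisfies Ite(M; fun x => T x ∧ T' x). (This is the and-merging rule showing that any two instances of the items assertion with prefix lengths n < m can be merged into a single items assertion of prefix length m.) -/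
/-- `l` satisfies the items assertion `Ite(U; V)` with prefix length `k`:
every position `p < k` satisfies `U p`, and every position `p ≥ k` satisfies `V`. -/
def ItemsSat {α : Type*} (k : ℕ) (U : Fin k → α → Prop) (V : α → Prop) (l : List α) : Prop :=
  ∀ (p : ℕ) (h : p < l.length),
    (∀ hp : p < k, U ⟨p, hp⟩ (l[p]'h)) ∧ (k ≤ p → V (l[p]'h))

theorem items_and_merging {α : Type*} (l : List α) (n m : ℕ) (hnm : n < m)
    (S : Fin n → α → Prop) (T : α → Prop)
    (S' : Fin m → α → Prop) (T' : α → Prop) :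
    (ItemsSat n S T l ∧ ItemsSat m S' T' l) ↔
      ItemsSat m
        (fun i x => if h : (i : ℕ) < n then S ⟨(i : ℕ), h⟩ x ∧ S' i x else T x ∧ S' i x)
        (fun x => T x ∧ T' x) l := by
  constructor
  · rintro ⟨h1, h2⟩ p h
    obtain ⟨a1, a2⟩ := h1 p h
    obtain ⟨b1, b2⟩ := h2 p h
    refine ⟨fun hp => ?_, fun hp => ⟨a2 (le_of_lt (lt_of_lt_of_le hnm hp)), b2 hp⟩⟩
    by_cases hpn : p < n
    · simp only [dif_pos hpn]
      exact ⟨a1 hpn, b1 hp⟩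
    · simp only [dif_neg hpn]
      exact ⟨a2 (le_of_not_gt hpn), b1 hp⟩
  · intro h
    constructor <;> intro p hp <;> obtain ⟨c1, c2⟩ := h p hp
    · refine ⟨fun hpn => ?_, fun hnp => ?_⟩
      · have := c1 (lt_trans hpn hnm)
        simp only [dif_pos hpn] at this
        exact this.1
      · by_cases hpm : p < m
        · have := c1 hpm
          simp only [dif_neg (not_lt.mpr hnp)] at this
          exact this.1
        · exact (c2 (le_of_not_gt hpm)).1
    · refine ⟨fun hpm => ?_, fun hmp => (c2 hmp).2⟩
      have := c1 hpm
      by_cases hpn : p < n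
      · simp only [dif_pos hpn] at this; exact this.2
      · simp only [dif_neg hpn] at this; exact this.2
end
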